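/- arXiv:1610.06618 — 3 statements merged into one kernel-verified Lean document; each statement's English description precedes it below -/
import Mathlib

section
/- Let C ∈ ℝ^{n×n} be an invertible matrix with columns c_1, …, c_n, let c ∈ ℝ^n be a nonzero vector, and let C̃ ∈ ℝ^{n×(n+1)} be the matrix with columns c_1, …, c_i, c, c_{i+1}, …, c_n, where 0 ≤ i ≤ n−1 and the first i+1 columns of C̃ are linearly independent. Suppose j is the smallest integer with i+2 ≤ j ≤ n such that the first j columns of C̃ are linearly dependent. Then C̃_{[∖j]} is invertible, and for every k with j < k ≤ n+1 the matrix C̃_{[∖k]} is not invertible; that is, j is the largest index ≤ n+1 for which deleting the corresponding column of C̃ yields an invertible matrix. -/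
noncomputable section

/-- Euclidean norm of a vector in `ℝ^n`. -/
def euclNorm {n : ℕ} (v : Fin n → ℝ) : ℝ := Real.sqrt (∑ t, (v t) ^ 2)

/-- The `n × n` matrix whose columns are the columns `cols` of an `n × (n+1)` matrix
with the `j`-th column (0-indexed) removed. -/
def deleteCol {n : ℕ} (cols : Fin (n + 1) → Fin n → ℝ) (j : Fin (n + 1)) :
    Matrix (Fin n) (Fin n) ℝ :=
  Matrix.of fun r k => cols (j.succAbove k) r

/-- The columns of the `n × (n+1)` matrix obtained from `C` by inserting the vector `c`
as a new column at (0-indexed) position `p`. -/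
def insertCols {n : ℕ} (C : Matrix (Fin n) (Fin n) ℝ) (c : Fin n → ℝ) (p : Fin (n + 1)) :
    Fin (n + 1) → Fin n → ℝ :=
  p.insertNth c fun j => C.transpose j

/-- The first `m + 1` columns (0-indexed positions `0, …, m`) of a system of `n + 1` columns. -/
def firstCols {n : ℕ} (cols : Fin (n + 1) → Fin n → ℝ) (m : Fin (n + 1)) :
    Fin ((m : ℕ) + 1) → Fin n → ℝ :=
  fun k => cols (Fin.castLE m.isLt k)

/-- With `C` invertible, `c ≠ 0`, the first `i+1` columns of
`C̃ = [c_1, …, c_i, c, c_{i+1}, …, c_n]` linearly independent, suppose `j` (0-indexed,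
`i + 1 ≤ j ≤ n - 1`) is the smallest index such that the first `j + 1` columns of `C̃`
are linearly dependent.  Then deleting the `j`-th column of `C̃` yields an invertible
matrix, while deleting any later column `k > j` yields a non-invertible one; i.e. `j` is
the largest index whose deletion gives an invertible matrix. -/
theorem stmt3 {n : ℕ} (C : Matrix (Fin n) (Fin n) ℝ) (hC : IsUnit C)
    (c : Fin n → ℝ) (hc : c ≠ 0) (i : Fin n)
    (hind : LinearIndependent ℝ (firstCols (insertCols C c i.castSucc) i.castSucc))
    (j : Fin (n + 1)) (hj1 : (i : ℕ) + 1 ≤ (j : ℕ)) (hj2 : (j : ℕ) < n)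
    (hdep : ¬ LinearIndependent ℝ (firstCols (insertCols C c i.castSucc) j))
    (hmin : ∀ m : Fin (n + 1), (i : ℕ) + 1 ≤ (m : ℕ) → (m : ℕ) < (j : ℕ) →
      LinearIndependent ℝ (firstCols (insertCols C c i.castSucc) m)) :
    IsUnit (deleteCol (insertCols C c i.castSucc) j) ∧
      ∀ k : Fin (n + 1), (j : ℕ) < (k : ℕ) →
        ¬ IsUnit (deleteCol (insertCols C c i.castSucc) k) := by
  set cols := insertCols C c i.castSucc with hcols
  -- the columns of `deleteCol cols k` as a family
  have hcolfam : ∀ k : Fin (n + 1),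
      (IsUnit (deleteCol cols k) ↔
        LinearIndependent ℝ (fun t : Fin n => cols (k.succAbove t))) := by
    intro k
    rw [← Matrix.linearIndependent_cols_iff_isUnit]
    rfl
  constructor
  · -- Part 1: deleting column j gives an invertible matrix.
    set w : Fin ((j : ℕ) + 1) → Fin n → ℝ := firstCols cols j with hw
    -- the first j columns are independent
    have hjpos : 1 ≤ (j : ℕ) := le_trans (Nat.le_add_left 1 i) hj1
    set m : Fin (n + 1) := ⟨(j : ℕ) - 1, by omega⟩ with hm
    have hmval : ((m : ℕ) + 1) = (j : ℕ) := by simp [hm]; omega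
    have hmind : LinearIndependent ℝ (firstCols cols m) := by
      rcases eq_or_lt_of_le hj1 with h | h
      · have : m = i.castSucc := by
          apply Fin.ext
          simp [hm, Fin.coe_castSucc]; omega
        rw [this]; exact hind
      · exact hmin m (by simp [hm]; omega) (by show (j : ℕ) - 1 < (j : ℕ); omega)
    have hinit : LinearIndependent ℝ (Fin.init w) := by
      have heq : Fin.init w = (firstCols cols m) ∘ (finCongr hmval.symm) := by
        funext t
        rfl
      rw [heq]
      exact hmind.comp _ (finCongr hmval.symm).injective
    have hlastmem : w (Fin.last _) ∈ Submodule.span ℝ (Set.range (Fin.init w)) := by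
      by_contra h'
      exact hdep (linearIndependent_fin_succ'.2 ⟨hinit, h'⟩)
    have hwlast : w (Fin.last _) = cols j := by
      rfl
    -- the target set
    set S : Set (Fin n → ℝ) := Set.range (fun t : Fin n => cols (j.succAbove t)) with hS
    have hmemS : ∀ p : Fin (n + 1), p ≠ j → cols p ∈ S := by
      intro p hp
      obtain ⟨z, hz⟩ := Fin.exists_succAbove_eq hp
      exact ⟨z, by show cols _ = cols _; rw [hz]⟩
    have hsub : Set.range (Fin.init w) ⊆ S := by
      rintro _ ⟨t, rfl⟩
      have h1 : Fin.init w t = cols (Fin.castLE j.isLt t.castSucc) := rfl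
      rw [h1]
      apply hmemS
      intro h
      have := congrArg Fin.val h
      simp at this
      omega
    have hcolsj : cols j ∈ Submodule.span ℝ S :=
      hwlast ▸ (Submodule.span_mono hsub hlastmem)
    have hCtop : Submodule.span ℝ (Set.range C.transpose) = ⊤ := by
      rw [show Set.range C.transpose = Set.range (Matrix.col C) from rfl, ← Matrix.range_mulVecLin, LinearMap.range_eq_top]
      exact Matrix.mulVec_surjective_iff_isUnit.2 hC
    have htop : Submodule.span ℝ S = ⊤ := by
      rw [eq_top_iff, ← hCtop]
      apply Submodule.span_le.2
      rintro _ ⟨t, rfl⟩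
      have hct : C.transpose t = cols (i.castSucc.succAbove t) := by
        simp [hcols, insertCols]
      rw [hct]
      by_cases hpj : i.castSucc.succAbove t = j
      · rw [hpj]; exact hcolsj
      · exact Submodule.subset_span (hmemS _ hpj)
    rw [← Matrix.mulVec_surjective_iff_isUnit]
    have hsurj : Function.Surjective (deleteCol cols j).mulVecLin := by
      rw [← LinearMap.range_eq_top, Matrix.range_mulVecLin]
      exact htop
    exact hsurj
  · -- Part 2
    intro k hk hu
    have hli := (hcolfam k).1 hu
    have hex : ∀ t : Fin ((j : ℕ) + 1), ∃ z : Fin n,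
        k.succAbove z = Fin.castLE j.isLt t := by
      intro t
      apply Fin.exists_succAbove_eq
      intro h
      have := congrArg Fin.val h
      simp at this
      omega
    choose g hg using hex
    have hginj : Function.Injective g := by
      intro a b hab
      have : Fin.castLE j.isLt a = Fin.castLE j.isLt b := by
        rw [← hg a, ← hg b, hab]
      exact Fin.castLE_injective _ this
    have : firstCols cols j = (fun t : Fin n => cols (k.succAbove t)) ∘ g := by
      funext t
      simp [firstCols, hg]
    exact hdep (this ▸ hli.comp g hginj)
end
end

section
/- Let R̄ ∈ ℝ^{n×n} be nonsingular with lattice L(R̄) = {R̄a : a ∈ ℤ^n} and successive minima λ_1 ≤ … ≤ λ_n. Suppose λ_{i−1} < λ_i for some 2 ≤ i ≤ n, and suppose c_1, …, c_i ∈ ℤ^n are such that R̄c_1, …, R̄c_i are linearly independent with ‖R̄c_j‖_2 = λ_j for 1 ≤ j ≤ i. Let c̄_1, …, c̄_k ∈ ℤ^n be any vectors with R̄c̄_1, …, R̄c̄_k linearly independent such that, for each 1 ≤ j ≤ k, either ‖R̄c̄_j‖_2 < λ_i, or ‖R̄c̄_j‖_2 = λ_i and c̄_j is not the i-th column of any solution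 of the SMP for R̄. Then R̄c̄_1, …, R̄c̄_k, R̄c_i are also linearly independent. -/
noncomputable section

/-- The lattice vector `R̄ a` associated with the integer vector `a`. -/
def latVec {n : ℕ} (R : Matrix (Fin n) (Fin n) ℝ) (a : Fin n → ℤ) : Fin n → ℝ :=
  R.mulVec fun t => (a t : ℝ)

/-- The `k`-th successive minimum of the lattice `L(R̄) = {R̄ a : a ∈ ℤ^n}`: the smallest
`r` such that the closed ball of radius `r` centered at the origin contains `k` linearly
independent lattice vectors. -/
def lamMin {n : ℕ} (R : Matrix (Fin n) (Fin n) ℝ) (k : ℕ) : ℝ :=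
  sInf {r : ℝ | ∃ v : Fin k → Fin n → ℤ,
    LinearIndependent ℝ (fun j => latVec R (v j)) ∧ ∀ j, euclNorm (latVec R (v j)) ≤ r}

/-- `C` is a solution of the successive minima problem (SMP) for `R̄`: an invertible
integer matrix whose `j`-th column `c_j` satisfies `‖R̄ c_j‖₂ = λ_j` for all `j`. -/
def IsSMPSolution {n : ℕ} (R : Matrix (Fin n) (Fin n) ℝ) (C : Matrix (Fin n) (Fin n) ℤ) : Prop :=
  C.det ≠ 0 ∧ ∀ j : Fin n, euclNorm (latVec R fun t => C t j) = lamMin R ((j : ℕ) + 1)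

namespace SMPaux

variable {n : ℕ}

lemma euclNorm_nonneg (v : Fin n → ℝ) : 0 ≤ euclNorm v := Real.sqrt_nonneg _

lemma abs_apply_le_euclNorm (v : Fin n → ℝ) (t : Fin n) : |v t| ≤ euclNorm v := by
  rw [euclNorm, ← Real.sqrt_sq_eq_abs]
  exact Real.sqrt_le_sqrt (Finset.single_le_sum (fun s _ => sq_nonneg (v s)) (Finset.mem_univ t))

/-- The defining set for `lamMin`. -/
def SSet (R : Matrix (Fin n) (Fin n) ℝ) (k : ℕ) : Set ℝ :=
  {r : ℝ | ∃ v : Fin k → Fin n → ℤ,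
    LinearIndependent ℝ (fun j => latVec R (v j)) ∧ ∀ j, euclNorm (latVec R (v j)) ≤ r}

lemma lamMin_eq (R : Matrix (Fin n) (Fin n) ℝ) (k : ℕ) : lamMin R k = sInf (SSet R k) := rfl

lemma bddBelow_SSet (R : Matrix (Fin n) (Fin n) ℝ) (k : ℕ) : BddBelow (SSet R (k + 1)) := by
  refine ⟨0, fun r hr => ?_⟩
  obtain ⟨v, -, hv⟩ := hr
  exact le_trans (euclNorm_nonneg (latVec R (v 0))) (hv 0)

variable (R : Matrix (Fin n) (Fin n) ℝ) (hR : R.det ≠ 0)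

section
include hR

lemma mulVec_inj : Function.Injective R.mulVec := by
  have : Invertible R := R.invertibleOfIsUnitDet (isUnit_iff_ne_zero.2 hR)
  exact R.mulVec_injective_of_invertible

lemma indep_std (k : ℕ) (hk : k ≤ n) :
    LinearIndependent ℝ (fun j : Fin k =>
      latVec R (fun t => (Pi.single (Fin.castLE hk j) 1 : Fin n → ℤ) t)) := by
  have h1 : LinearIndependent ℝ (fun j : Fin n => R.mulVecLin (Pi.basisFun ℝ (Fin n) j)) := by
    refine (Pi.basisFun ℝ (Fin n)).linearIndependent.map' R.mulVecLin ?_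
    rw [LinearMap.ker_eq_bot]
    exact mulVec_inj R hR
  have h2 := h1.comp (Fin.castLE hk) (Fin.castLE_injective hk)
  have e : ∀ j : Fin k, latVec R (fun t => (Pi.single (Fin.castLE hk j) 1 : Fin n → ℤ) t)
      = R.mulVecLin (Pi.basisFun ℝ (Fin n) (Fin.castLE hk j)) := by
    intro j
    rw [latVec, Matrix.mulVecLin_apply, Pi.basisFun_apply]
    have e2 : (fun t => ((Pi.single (Fin.castLE hk j) 1 : Fin n → ℤ) t : ℝ))
        = Pi.single (Fin.castLE hk j) (1 : ℝ) := by
      funext t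
      simp only [Pi.single_apply]
      split <;> simp
    rw [e2]
  convert h2 using 1
  funext j
  exact e j

lemma SSet_nonempty (k : ℕ) (hk : k ≤ n) : (SSet R k).Nonempty := by
  classical
  set v : Fin k → Fin n → ℤ := fun j t => (Pi.single (Fin.castLE hk j) 1 : Fin n → ℤ) t
  set f : Fin k → ℝ := fun j => euclNorm (latVec R (v j)) with hf
  refine ⟨∑ j, f j, v, indep_std R hR k hk, fun j => ?_⟩
  exact Finset.single_le_sum (f := f) (fun s _ => euclNorm_nonneg _) (Finset.mem_univ j)

lemma finite_ball (B : ℝ) : {a : Fin n → ℤ | euclNorm (latVec R a) ≤ B}.Finite := by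
  classical
  set Ri := R⁻¹ with hRi
  have hRu : IsUnit R.det := isUnit_iff_ne_zero.2 hR
  have hleft : ∀ a : Fin n → ℤ, Ri.mulVec (latVec R a) = fun t => (a t : ℝ) := by
    intro a
    rw [latVec, Matrix.mulVec_mulVec, Matrix.nonsing_inv_mul R hRu, Matrix.one_mulVec]
  set K : ℝ := (∑ p : Fin n × Fin n, |Ri p.1 p.2|) * max B 0 with hK
  set N : ℤ := ⌈K⌉ with hN
  refine Set.Finite.subset (Set.Finite.pi' (t := fun _ : Fin n => Set.Icc (-N) N)
    (fun _ => Set.finite_Icc _ _)) ?_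
  intro a ha
  simp only [Set.mem_setOf_eq] at ha ⊢
  intro t
  rw [Set.mem_Icc, ← abs_le]
  have h1 : |(a t : ℝ)| ≤ K := by
    have e1 : (a t : ℝ) = Ri.mulVec (latVec R a) t := by rw [hleft]
    rw [e1]
    have e2 : Ri.mulVec (latVec R a) t = ∑ s, Ri t s * latVec R a s := rfl
    rw [e2]
    calc |∑ s, Ri t s * latVec R a s| ≤ ∑ s, |Ri t s * latVec R a s| :=
          Finset.abs_sum_le_sum_abs _ _
      _ ≤ ∑ s, |Ri t s| * max B 0 := by
          refine Finset.sum_le_sum fun s _ => ?_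
          rw [abs_mul]
          refine mul_le_mul_of_nonneg_left ?_ (abs_nonneg _)
          exact le_trans (abs_apply_le_euclNorm _ s) (le_max_of_le_left ha)
      _ = (∑ s, |Ri t s|) * max B 0 := by rw [Finset.sum_mul]
      _ ≤ K := by
          rw [hK]
          refine mul_le_mul_of_nonneg_right ?_ (le_max_right _ _)
          rw [Fintype.sum_prod_type]
          exact Finset.single_le_sum
            (f := fun t' => ∑ s, |Ri t' s|)
            (fun t' _ => Finset.sum_nonneg fun s _ => abs_nonneg _) (Finset.mem_univ t)
  have h2 : |((a t : ℤ) : ℝ)| ≤ (N : ℝ) := le_trans h1 (Int.le_ceil K)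
  exact_mod_cast h2

lemma attain (k : ℕ) (hk : k ≤ n) :
    ∃ v : Fin k → Fin n → ℤ, LinearIndependent ℝ (fun j => latVec R (v j)) ∧
      ∀ j, euclNorm (latVec R (v j)) ≤ lamMin R k := by
  classical
  rcases Nat.eq_zero_or_pos k with rfl | hk0
  · exact ⟨fun j => 0, linearIndependent_empty_type, fun j => j.elim0⟩
  obtain ⟨k', rfl⟩ : ∃ k', k = k' + 1 := ⟨k - 1, by omega⟩
  have hne : (SSet R (k' + 1)).Nonempty := SSet_nonempty R hR _ hk
  have hbdd := bddBelow_SSet R k'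
  set lam := lamMin R (k' + 1) with hlam
  obtain ⟨r₁, hr₁S, hr₁⟩ : ∃ r ∈ SSet R (k' + 1), r < lam + 1 :=
    (csInf_lt_iff hbdd hne).1 (lt_add_one lam)
  set P : Set (Fin (k' + 1) → Fin n → ℤ) :=
    {v | LinearIndependent ℝ (fun j => latVec R (v j)) ∧
      ∀ j, euclNorm (latVec R (v j)) ≤ lam + 1} with hP
  have hPfin : P.Finite := by
    refine Set.Finite.subset (Set.Finite.pi'
      (t := fun _ : Fin (k' + 1) => {a : Fin n → ℤ | euclNorm (latVec R a) ≤ lam + 1})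
      (fun _ => finite_ball R hR _)) ?_
    intro v hv
    exact fun j => hv.2 j
  have hPne : P.Nonempty := by
    obtain ⟨v₁, h1, h2⟩ := hr₁S
    exact ⟨v₁, h1, fun j => le_trans (h2 j) hr₁.le⟩
  set m : (Fin (k' + 1) → Fin n → ℤ) → ℝ :=
    fun v => Finset.univ.sup' Finset.univ_nonempty (fun j => euclNorm (latVec R (v j))) with hm
  obtain ⟨v₀, hv₀P, hv₀min⟩ := Set.exists_min_image P m hPfin hPne
  have hkey : m v₀ ≤ lam := by
    refine le_csInf hne fun r hr => ?_
    rcases le_or_gt (lam + 1) r with h | h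
    · exact le_trans (Finset.sup'_le _ _ fun j _ => hv₀P.2 j) h
    · obtain ⟨vr, hvr1, hvr2⟩ := hr
      have hvrP : vr ∈ P := ⟨hvr1, fun j => le_trans (hvr2 j) h.le⟩
      exact le_trans (hv₀min vr hvrP) (Finset.sup'_le _ _ fun j _ => hvr2 j)
  exact ⟨v₀, hv₀P.1, fun j =>
    le_trans (Finset.le_sup' (fun j => euclNorm (latVec R (v₀ j))) (Finset.mem_univ j)) hkey⟩

end

lemma core (m : ℕ) (u : Fin m → Fin n → ℤ)
    (hu : LinearIndependent ℝ fun j => latVec R (u j))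
    (hun : ∀ j : Fin m, euclNorm (latVec R (u j)) = lamMin R ((j : ℕ) + 1))
    (a : Fin n → ℤ)
    (ha : latVec R a ∉ Submodule.span ℝ (Set.range fun j => latVec R (u j))) :
    lamMin R (m + 1) ≤ euclNorm (latVec R a) := by
  classical
  by_contra hcon
  push_neg at hcon
  set r₀ := euclNorm (latVec R a) with hr₀
  have hp : ∃ j, r₀ < lamMin R (j + 1) := ⟨m, hcon⟩
  set j := Nat.find hp with hj
  have hjm : j ≤ m := Nat.find_min' hp hcon
  set w : Fin (j + 1) → Fin n → ℤ := Fin.snoc (fun t : Fin j => u (Fin.castLE hjm t)) a with hw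
  have hcomp : (fun t => latVec R (w t)) =
      Fin.snoc (fun t : Fin j => latVec R (u (Fin.castLE hjm t))) (latVec R a) := by
    rw [hw]
    exact Fin.comp_snoc (latVec R) _ _
  have hwi : LinearIndependent ℝ (fun t => latVec R (w t)) := by
    rw [hcomp, linearIndependent_fin_snoc]
    refine ⟨hu.comp (Fin.castLE hjm) (Fin.castLE_injective hjm), fun hmem => ha ?_⟩
    refine Submodule.span_mono ?_ hmem
    rintro x ⟨t, rfl⟩
    exact ⟨Fin.castLE hjm t, rfl⟩
  have hnorms : ∀ t : Fin (j + 1), euclNorm (latVec R (w t)) ≤ r₀ := by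
    intro t
    refine Fin.lastCases ?_ ?_ t
    · rw [hw, Fin.snoc_last]
    · intro t'
      rw [hw, Fin.snoc_castSucc, hun (Fin.castLE hjm t')]
      have ht' : (t' : ℕ) < j := t'.isLt
      have := Nat.find_min hp ht'
      push_neg at this
      simpa using this
  have hle : lamMin R (j + 1) ≤ r₀ := csInf_le (bddBelow_SSet R j) ⟨w, hwi, hnorms⟩
  exact absurd hle (not_le.2 (Nat.find_spec hp))

section
include hR

lemma step (m : ℕ) (hm : m < n) (u : Fin m → Fin n → ℤ)
    (hu : LinearIndependent ℝ fun j => latVec R (u j))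
    (hun : ∀ j : Fin m, euclNorm (latVec R (u j)) = lamMin R ((j : ℕ) + 1)) :
    ∃ a : Fin n → ℤ, euclNorm (latVec R a) = lamMin R (m + 1) ∧
      latVec R a ∉ Submodule.span ℝ (Set.range fun j => latVec R (u j)) := by
  classical
  obtain ⟨w, hwi, hwn⟩ := attain R hR (m + 1) hm
  set U := Submodule.span ℝ (Set.range fun j => latVec R (u j)) with hU
  have hex : ∃ t, latVec R (w t) ∉ U := by
    by_contra hall
    push_neg at hall
    have h1 : LinearIndependent ℝ (fun t => (⟨latVec R (w t), hall t⟩ : U)) :=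
      LinearIndependent.of_comp U.subtype hwi
    have h2 := h1.fintype_card_le_finrank
    have h3 : Module.finrank ℝ U ≤ m := by
      have := finrank_range_le_card (R := ℝ) (fun j : Fin m => latVec R (u j))
      simpa [Set.finrank] using this
    simp only [Fintype.card_fin] at h2
    omega
  obtain ⟨t, ht⟩ := hex
  exact ⟨w t, le_antisymm (hwn t) (core R m u hu hun (w t) ht), ht⟩

lemma extend : ∀ d m : ℕ, ∀ _hd : m + d = n, ∀ u : Fin m → Fin n → ℤ,
    (LinearIndependent ℝ fun j => latVec R (u j)) →
    (∀ j : Fin m, euclNorm (latVec R (u j)) = lamMin R ((j : ℕ) + 1)) →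
    ∃ U : Fin n → Fin n → ℤ, (LinearIndependent ℝ fun j => latVec R (U j)) ∧
      (∀ j : Fin n, euclNorm (latVec R (U j)) = lamMin R ((j : ℕ) + 1)) ∧
      ∀ j : Fin m, U (Fin.castLE (by omega) j) = u j := by
  intro d
  induction d with
  | zero =>
    intro m hmn u hu hun
    have hm : m = n := by omega
    subst hm
    refine ⟨u, hu, hun, fun j => ?_⟩
    have e : Fin.castLE (show m ≤ m from le_refl m) j = j := Fin.ext rfl
    rw [e]
  | succ d ih =>
    intro m hmn u hu hun
    have hm : m < n := by omega
    obtain ⟨a, han, haU⟩ := step R hR m hm u hu hun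
    set u' : Fin (m + 1) → Fin n → ℤ := Fin.snoc u a with hu'def
    have hcomp : (fun t => latVec R (u' t)) =
        Fin.snoc (fun t => latVec R (u t)) (latVec R a) := by
      rw [hu'def]
      exact Fin.comp_snoc (latVec R) _ _
    have hu' : LinearIndependent ℝ (fun t => latVec R (u' t)) := by
      rw [hcomp, linearIndependent_fin_snoc]
      exact ⟨hu, haU⟩
    have hun' : ∀ j : Fin (m + 1), euclNorm (latVec R (u' j)) = lamMin R ((j : ℕ) + 1) := by
      intro t
      refine Fin.lastCases ?_ ?_ t
      · rw [hu'def, Fin.snoc_last, Fin.val_last]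
        exact han
      · intro t'
        rw [hu'def, Fin.snoc_castSucc, Fin.coe_castSucc]
        exact hun t'
    obtain ⟨U, h1, h2, h3⟩ := ih (m + 1) (by omega) u' hu' hun'
    refine ⟨U, h1, h2, fun j => ?_⟩
    have e1 : Fin.castLE (show m ≤ n by omega) j =
        Fin.castLE (show m + 1 ≤ n by omega) (Fin.castLE (Nat.le_succ m) j) := Fin.ext rfl
    rw [e1, h3]
    have e2 : Fin.castLE (Nat.le_succ m) j = Fin.castSucc j := Fin.ext rfl
    rw [e2, hu'def, Fin.snoc_castSucc]

end

end SMPaux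

/-- Lemma 2.  Let `R̄` be nonsingular with `λ_{i-1} < λ_i` for some
`2 ≤ i ≤ n`, and let `c_1, …, c_i ∈ ℤ^n` be such that `R̄c_1, …, R̄c_i` are linearly
independent with `‖R̄c_j‖₂ = λ_j` for `1 ≤ j ≤ i`.  Let `c̄_1, …, c̄_k ∈ ℤ^n` be such that
`R̄c̄_1, …, R̄c̄_k` are linearly independent and, for each `j`, either `‖R̄c̄_j‖₂ < λ_i`,
or `‖R̄c̄_j‖₂ = λ_i` and `c̄_j` is not the `i`-th column of any solution of the SMP.
Then `R̄c̄_1, …, R̄c̄_k, R̄c_i` are also linearly independent. -/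
theorem stmt9 {n : ℕ} (R : Matrix (Fin n) (Fin n) ℝ) (hR : R.det ≠ 0)
    (i : ℕ) (h2 : 2 ≤ i) (hin : i ≤ n)
    (hlt : lamMin R (i - 1) < lamMin R i)
    (c : Fin i → Fin n → ℤ)
    (hindep : LinearIndependent ℝ fun j => latVec R (c j))
    (hnorm : ∀ j : Fin i, euclNorm (latVec R (c j)) = lamMin R ((j : ℕ) + 1))
    (k : ℕ) (cb : Fin k → Fin n → ℤ)
    (hbindep : LinearIndependent ℝ fun j => latVec R (cb j))
    (hcond : ∀ j : Fin k,
      euclNorm (latVec R (cb j)) < lamMin R i ∨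
        (euclNorm (latVec R (cb j)) = lamMin R i ∧
          ¬ ∃ M : Matrix (Fin n) (Fin n) ℤ, IsSMPSolution R M ∧
            (fun t => M t ⟨i - 1, by omega⟩) = cb j)) :
    LinearIndependent ℝ
      (Fin.snoc (fun j => latVec R (cb j)) (latVec R (c ⟨i - 1, by omega⟩)) :
        Fin (k + 1) → Fin n → ℝ) := by
  classical
  obtain ⟨i', rfl⟩ : ∃ i', i = i' + 1 := ⟨i - 1, by omega⟩
  rw [linearIndependent_fin_snoc]
  refine ⟨hbindep, fun hmem => ?_⟩
  open SMPaux in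
  set cpre : Fin i' → Fin n → ℤ := fun j => c (Fin.castLE (Nat.le_succ i') j) with hcpre
  have hpreindep : LinearIndependent ℝ (fun j : Fin i' => latVec R (cpre j)) :=
    hindep.comp (Fin.castLE (Nat.le_succ i')) (Fin.castLE_injective _)
  have hprenorm : ∀ j : Fin i', euclNorm (latVec R (cpre j)) = lamMin R ((j : ℕ) + 1) := by
    intro j
    have := hnorm (Fin.castLE (Nat.le_succ i') j)
    simpa using this
  have hciV : latVec R (c ⟨i' + 1 - 1, by omega⟩) ∉
      Submodule.span ℝ (Set.range fun j : Fin i' => latVec R (cpre j)) := by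
    have hnot : Fin.last i' ∉ Set.range (Fin.castLE (Nat.le_succ i')) := by
      rintro ⟨t, ht⟩
      have h := congrArg Fin.val ht
      simp only [Fin.coe_castLE, Fin.val_last] at h
      exact absurd h (Nat.ne_of_lt t.isLt)
    have h := hindep.notMem_span_image (s := Set.range (Fin.castLE (Nat.le_succ i'))) hnot
    intro hmemV
    apply h
    have hVeq : Submodule.span ℝ (Set.range fun j : Fin i' => latVec R (cpre j)) =
        Submodule.span ℝ ((fun j => latVec R (c j)) '' Set.range (Fin.castLE (Nat.le_succ i'))) := by
      congr 1
      rw [← Set.range_comp]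
      rfl
    rw [hVeq] at hmemV
    exact hmemV
  have hexj : ∃ j, latVec R (cb j) ∉
      Submodule.span ℝ (Set.range fun j : Fin i' => latVec R (cpre j)) := by
    by_contra hall
    push_neg at hall
    apply hciV
    have hsub : Submodule.span ℝ (Set.range fun j => latVec R (cb j)) ≤
        Submodule.span ℝ (Set.range fun j : Fin i' => latVec R (cpre j)) :=
      Submodule.span_le.2 (by rintro x ⟨t, rfl⟩; exact hall t)
    exact hsub hmem
  obtain ⟨j₀, hj₀⟩ := hexj
  have hge : lamMin R (i' + 1) ≤ euclNorm (latVec R (cb j₀)) :=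
    SMPaux.core R i' cpre hpreindep hprenorm (cb j₀) hj₀
  rcases hcond j₀ with hlt' | ⟨heq, hnosol⟩
  · exact absurd hge (not_le.2 hlt')
  · set u₀ : Fin (i' + 1) → Fin n → ℤ := Fin.snoc cpre (cb j₀) with hu₀
    have hcomp : (fun t => latVec R (u₀ t)) =
        Fin.snoc (fun t => latVec R (cpre t)) (latVec R (cb j₀)) := by
      rw [hu₀]
      exact Fin.comp_snoc (latVec R) _ _
    have hu₀i : LinearIndependent ℝ fun t => latVec R (u₀ t) := by
      rw [hcomp, linearIndependent_fin_snoc]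
      exact ⟨hpreindep, hj₀⟩
    have hu₀n : ∀ t : Fin (i' + 1), euclNorm (latVec R (u₀ t)) = lamMin R ((t : ℕ) + 1) := by
      intro t
      refine Fin.lastCases ?_ ?_ t
      · rw [hu₀, Fin.snoc_last, Fin.val_last]
        exact heq
      · intro t'
        rw [hu₀, Fin.snoc_castSucc, Fin.coe_castSucc]
        exact hprenorm t'
    obtain ⟨U, hUi, hUn, hUpre⟩ :=
      SMPaux.extend R hR (n - (i' + 1)) (i' + 1) (by omega) u₀ hu₀i hu₀n
    set M : Matrix (Fin n) (Fin n) ℤ := Matrix.of fun t j => U j t with hM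
    set Mr : Matrix (Fin n) (Fin n) ℝ := M.map (Int.cast) with hMr
    have hcol : ∀ j t, (R * Mr) t j = latVec R (U j) t := by
      intro j t
      simp [Matrix.mul_apply, hMr, hM, latVec, Matrix.mulVec, dotProduct]
    have hdetRM : (R * Mr).det ≠ 0 := by
      rw [Ne, ← Matrix.exists_mulVec_eq_zero_iff]
      rintro ⟨v, hv0, hv⟩
      have hsum : ∑ j, v j • latVec R (U j) = 0 := by
        funext t
      -- (∑ j, v j • f j) t = ∑ j, v j * f j t
        have e1 : (∑ j, v j • latVec R (U j)) t = ∑ j, v j * latVec R (U j) t := by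
          rw [Finset.sum_apply]
          rfl
        have e2 : (R * Mr).mulVec v t = ∑ j, (R * Mr) t j * v j := rfl
        have e3 := congrFun hv t
        rw [e2] at e3
        rw [e1]
        calc ∑ j, v j * latVec R (U j) t = ∑ j, (R * Mr) t j * v j := by
              refine Finset.sum_congr rfl fun j _ => ?_
              rw [hcol j t, mul_comm]
          _ = 0 := e3
      have hall0 := Fintype.linearIndependent_iff.1 hUi v hsum
      exact hv0 (funext hall0)
    have hdetM : M.det ≠ 0 := by
      intro h0
      apply hdetRM
      rw [Matrix.det_mul]
      have e : Mr.det = ((M.det : ℤ) : ℝ) := ((Int.castRingHom ℝ).map_det M).symm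
      rw [e, h0]
      simp
    have hnormM : ∀ j : Fin n, euclNorm (latVec R fun t => M t j) = lamMin R ((j : ℕ) + 1) := by
      intro j
      exact hUn j
    have hcolEq : (fun t => M t ⟨i' + 1 - 1, by omega⟩) = cb j₀ := by
      have e0 : (fun t => M t ⟨i' + 1 - 1, by omega⟩) = U ⟨i' + 1 - 1, by omega⟩ := rfl
      rw [e0]
      have e1 : (⟨i' + 1 - 1, by omega⟩ : Fin n) =
          Fin.castLE (show i' + 1 ≤ n by omega) (Fin.last i') := Fin.ext rfl
      rw [e1, hUpre (Fin.last i'), hu₀, Fin.snoc_last]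
    exact hnosol ⟨M, ⟨hdetM, hnormM⟩, hcolEq⟩
end
end

section
/- Let R̄ ∈ ℝ^{n×n} be nonsingular with lattice L(R̄) = {R̄a : a ∈ ℤ^n} and successive minima λ_1 ≤ … ≤ λ_n. Suppose c_1, …, c_{i−1} ∈ ℤ^n satisfy that R̄c_1, …, R̄c_{i−1} are linearly independent with ‖R̄c_j‖_2 = λ_j for 1 ≤ j ≤ i−1, and let c̄ ∈ ℤ^n satisfy ‖R̄c̄‖_2 = λ_i. If c̄ is not the i-th column of any solution of the SMP for R̄, then R̄c̄ is a linear combination of R̄c_1, …, R̄c_{i−1}. -/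
noncomputable section

namespace Stmt19Aux

open Submodule Set Matrix

variable {n : ℕ}

/-- The defining set of `lamMin`. -/
def SMSet (R : Matrix (Fin n) (Fin n) ℝ) (k : ℕ) : Set ℝ :=
  {r : ℝ | ∃ v : Fin k → Fin n → ℤ,
    LinearIndependent ℝ (fun j => latVec R (v j)) ∧ ∀ j, euclNorm (latVec R (v j)) ≤ r}

lemma lamMin_eq (R : Matrix (Fin n) (Fin n) ℝ) (k : ℕ) : lamMin R k = sInf (SMSet R k) := rfl

lemma euclNorm_nonneg (v : Fin n → ℝ) : 0 ≤ euclNorm v := Real.sqrt_nonneg _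

lemma abs_le_euclNorm (v : Fin n → ℝ) (s : Fin n) : |v s| ≤ euclNorm v := by
  rw [euclNorm, ← Real.sqrt_sq_eq_abs]
  exact Real.sqrt_le_sqrt
    (Finset.single_le_sum (fun t _ => sq_nonneg (v t)) (Finset.mem_univ s))

lemma bddBelow_SMSet (R : Matrix (Fin n) (Fin n) ℝ) {k : ℕ} (hk : 1 ≤ k) :
    BddBelow (SMSet R k) := by
  refine ⟨0, fun r hr => ?_⟩
  obtain ⟨v, _, hv⟩ := hr
  exact le_trans (euclNorm_nonneg _) (hv ⟨0, hk⟩)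

lemma lamMin_le (R : Matrix (Fin n) (Fin n) ℝ) {k : ℕ} (hk : 1 ≤ k) {r : ℝ}
    (hr : r ∈ SMSet R k) : lamMin R k ≤ r :=
  csInf_le (bddBelow_SMSet R hk) hr

lemma SMSet_nonempty (R : Matrix (Fin n) (Fin n) ℝ) (hR : R.det ≠ 0) {k : ℕ} (hk : k ≤ n) :
    (SMSet R k).Nonempty := by
  classical
  refine ⟨∑ t : Fin n, euclNorm (fun s => R s t),
    fun j : Fin k => fun t => if t = Fin.castLE hk j then (1 : ℤ) else 0, ?_, ?_⟩
  · have hcol : ∀ j : Fin k,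
        (latVec R fun t => if t = Fin.castLE hk j then (1 : ℤ) else 0)
          = Rᵀ (Fin.castLE hk j) := by
      intro j
      funext s
      simp only [latVec, Matrix.mulVec, dotProduct]
      rw [Finset.sum_eq_single (Fin.castLE hk j)]
      · simp [Matrix.transpose_apply]
      · intro b _ hb; simp [hb]
      · simp
    simp only [hcol]
    have hcols : LinearIndependent ℝ (fun i : Fin n => Rᵀ i) :=
      Matrix.linearIndependent_cols_iff_isUnit.2
        ((Matrix.isUnit_iff_isUnit_det R).2 (isUnit_iff_ne_zero.2 hR))
    exact hcols.comp (Fin.castLE hk) (Fin.castLE_injective hk)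
  · intro j
    have hcol : (latVec R fun t => if t = Fin.castLE hk j then (1 : ℤ) else 0)
        = fun s => R s (Fin.castLE hk j) := by
      funext s
      simp only [latVec, Matrix.mulVec, dotProduct]
      rw [Finset.sum_eq_single (Fin.castLE hk j)]
      · simp
      · intro b _ hb; simp [hb]
      · simp
    rw [hcol]
    exact Finset.single_le_sum (f := fun t => euclNorm (fun s => R s t))
      (fun t _ => euclNorm_nonneg _) (Finset.mem_univ _)

lemma finite_bounded (R : Matrix (Fin n) (Fin n) ℝ) (hR : R.det ≠ 0) (B : ℝ) :
    {a : Fin n → ℤ | euclNorm (latVec R a) ≤ B}.Finite := by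
  classical
  set N := R⁻¹ with hN
  set C : ℝ := (∑ t, ∑ s, |N t s|) * max B 0 with hC
  have hNR : N * R = 1 := Matrix.nonsing_inv_mul R (isUnit_iff_ne_zero.2 hR)
  have hrec : ∀ a : Fin n → ℤ, (fun t => (a t : ℝ)) = N.mulVec (latVec R a) := by
    intro a
    rw [latVec, Matrix.mulVec_mulVec, hNR, Matrix.one_mulVec]
  have hbound : ∀ a ∈ {a : Fin n → ℤ | euclNorm (latVec R a) ≤ B}, ∀ t, |(a t : ℝ)| ≤ C := by
    intro a ha t
    have h1 : (a t : ℝ) = ∑ s, N t s * latVec R a s := by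
      have := congrFun (hrec a) t
      simpa [Matrix.mulVec, dotProduct] using this
    rw [h1]
    calc |∑ s, N t s * latVec R a s| ≤ ∑ s, |N t s * latVec R a s| := Finset.abs_sum_le_sum_abs _ _
      _ ≤ ∑ s, |N t s| * max B 0 := by
          refine Finset.sum_le_sum fun s _ => ?_
          rw [abs_mul]
          refine mul_le_mul_of_nonneg_left ?_ (abs_nonneg _)
          exact le_trans (le_trans (abs_le_euclNorm _ s) ha) (le_max_left _ _)
      _ = (∑ s, |N t s|) * max B 0 := by rw [Finset.sum_mul]
      _ ≤ C := by
          rw [hC]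
          refine mul_le_mul_of_nonneg_right ?_ (le_max_right _ _)
          exact Finset.single_le_sum (f := fun t => ∑ s, |N t s|)
            (fun t _ => Finset.sum_nonneg fun s _ => abs_nonneg _) (Finset.mem_univ t)
  set K : ℤ := ⌈C⌉ with hK
  refine Set.Finite.subset (Set.Finite.pi (fun t : Fin n => Set.finite_Icc (-K) K)) ?_
  intro a ha
  simp only [Set.mem_pi, Set.mem_univ, forall_true_left, Set.mem_Icc, true_implies]
  intro t
  have h2 : |(a t : ℝ)| ≤ C := hbound a ha t
  have h3 : ((|a t| : ℤ) : ℝ) ≤ (K : ℝ) := by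
    rw [Int.cast_abs]
    exact le_trans h2 (Int.le_ceil C)
  have h4 : |a t| ≤ K := by exact_mod_cast h3
  exact abs_le.mp h4

lemma exists_attain (R : Matrix (Fin n) (Fin n) ℝ) (hR : R.det ≠ 0) {k : ℕ}
    (hk1 : 1 ≤ k) (hkn : k ≤ n) :
    ∃ v : Fin k → Fin n → ℤ, LinearIndependent ℝ (fun j => latVec R (v j)) ∧
      ∀ j, euclNorm (latVec R (v j)) ≤ lamMin R k := by
  classical
  have hne : Nonempty (Fin k) := ⟨⟨0, hk1⟩⟩
  set lam : ℝ := lamMin R k with hlam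
  have hSne : (SMSet R k).Nonempty := SMSet_nonempty R hR hkn
  have hSbdd : BddBelow (SMSet R k) := bddBelow_SMSet R hk1
  set F : Finset (Fin n → ℤ) := (finite_bounded R hR (lam + 1)).toFinset with hF
  set T : Finset (Fin k → Fin n → ℤ) :=
    (Fintype.piFinset fun _ => F).filter
      (fun v => LinearIndependent ℝ (fun j => latVec R (v j))) with hT
  have hmemT : ∀ {r : ℝ}, r ≤ lam + 1 → ∀ v : Fin k → Fin n → ℤ,
      LinearIndependent ℝ (fun j => latVec R (v j)) →
      (∀ j, euclNorm (latVec R (v j)) ≤ r) → v ∈ T := by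
    intro r hr v hvind hvle
    refine Finset.mem_filter.2 ⟨Fintype.mem_piFinset.2 fun j => ?_, hvind⟩
    rw [hF, Set.Finite.mem_toFinset]
    exact le_trans (hvle j) hr
  have hwit : ∀ ε : ℝ, 0 < ε →
      ∃ v ∈ T, ∀ j, euclNorm (latVec R (v j)) ≤ lam + min ε 1 := by
    intro ε hε
    have hlt : lam < lam + min ε 1 := by
      have : (0:ℝ) < min ε 1 := lt_min hε one_pos
      linarith
    obtain ⟨r, hrS, hrlt⟩ := (csInf_lt_iff hSbdd hSne).1 hlt
    obtain ⟨v, hvind, hvle⟩ := hrS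
    refine ⟨v, hmemT (le_trans hrlt.le (by have := min_le_right ε 1; linarith)) v hvind hvle,
      fun j => le_trans (hvle j) hrlt.le⟩
  have hTne : T.Nonempty := by
    obtain ⟨v, hvT, _⟩ := hwit 1 one_pos
    exact ⟨v, hvT⟩
  set G : Finset ℝ := T.image (fun v =>
      Finset.univ.sup' Finset.univ_nonempty fun j => euclNorm (latVec R (v j))) with hG
  have hGne : G.Nonempty := hTne.image _
  set m : ℝ := G.min' hGne with hm
  have hmG : m ∈ G := Finset.min'_mem _ _
  obtain ⟨v, hvT, hvm⟩ := Finset.mem_image.1 hmG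
  have hvind : LinearIndependent ℝ (fun j => latVec R (v j)) := (Finset.mem_filter.1 hvT).2
  have hmle : m ≤ lam := by
    refine le_of_forall_pos_le_add fun ε hε => ?_
    obtain ⟨w, hwT, hwle⟩ := hwit ε hε
    have h1 : m ≤ Finset.univ.sup' Finset.univ_nonempty
        fun j => euclNorm (latVec R (w j)) :=
      Finset.min'_le _ _ (Finset.mem_image_of_mem _ hwT)
    have h2 : (Finset.univ.sup' Finset.univ_nonempty
        fun j => euclNorm (latVec R (w j))) ≤ lam + min ε 1 :=
      Finset.sup'_le _ _ fun j _ => hwle j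
    have := min_le_left ε 1
    linarith
  refine ⟨v, hvind, fun j => ?_⟩
  calc euclNorm (latVec R (v j))
      ≤ Finset.univ.sup' Finset.univ_nonempty fun j => euclNorm (latVec R (v j)) :=
        Finset.le_sup' (fun j => euclNorm (latVec R (v j))) (Finset.mem_univ j)
    _ = m := hvm
    _ ≤ lam := hmle

/-- Lower bound: a lattice vector outside the span of vectors attaining `λ_1, …, λ_k`
has norm at least `λ_{k+1}`. -/
lemma lam_le_of_notMem (R : Matrix (Fin n) (Fin n) ℝ) :
    ∀ (k : ℕ) (u : Fin k → Fin n → ℤ),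
      LinearIndependent ℝ (fun j => latVec R (u j)) →
      (∀ j : Fin k, euclNorm (latVec R (u j)) = lamMin R ((j : ℕ) + 1)) →
      ∀ w : Fin n → ℤ,
        latVec R w ∉ Submodule.span ℝ (Set.range fun j => latVec R (u j)) →
        lamMin R (k + 1) ≤ euclNorm (latVec R w) := by
  intro k
  induction k using Nat.strong_induction_on with
  | _ k ih =>
    intro u hind hnorm w hw
    by_contra hlt
    push_neg at hlt
    -- snoc family is k+1 independent vectors
    set u' : Fin (k+1) → Fin n → ℤ := Fin.snoc u w with hu'
    have hsnoc : (fun j : Fin (k+1) => latVec R (u' j))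
        = Fin.snoc (fun j => latVec R (u j)) (latVec R w) := by
      funext j
      refine Fin.lastCases ?_ ?_ j
      · simp [hu']
      · intro j; simp [hu']
    have hind' : LinearIndependent ℝ (fun j : Fin (k+1) => latVec R (u' j)) := by
      rw [hsnoc]
      exact linearIndependent_fin_snoc.2 ⟨hind, hw⟩
    rcases Nat.eq_zero_or_pos k with hk0 | hkpos
    · -- k = 0 : contradiction directly
      subst hk0
      have hmem : euclNorm (latVec R w) ∈ SMSet R 1 := by
        refine ⟨u', hind', fun j => ?_⟩
        have hj : j = Fin.last 0 := Subsingleton.elim _ _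
        rw [hj, hu', Fin.snoc_last]
      exact absurd (lamMin_le R le_rfl hmem) (not_le.2 hlt)
    · have hne : Nonempty (Fin k) := ⟨⟨0, hkpos⟩⟩
      set M : ℝ := Finset.univ.sup' Finset.univ_nonempty
        (fun j : Fin k => euclNorm (latVec R (u j))) with hM
      have hmem : max M (euclNorm (latVec R w)) ∈ SMSet R (k + 1) := by
        refine ⟨u', hind', fun j => ?_⟩
        refine Fin.lastCases ?_ ?_ j
        · simp only [hu', Fin.snoc_last]
          exact le_max_right _ _
        · intro j
          simp only [hu', Fin.snoc_castSucc]
          exact le_trans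
            (Finset.le_sup' (fun j : Fin k => euclNorm (latVec R (u j))) (Finset.mem_univ j))
            (le_max_left _ _)
      have hle : lamMin R (k + 1) ≤ max M (euclNorm (latVec R w)) :=
        lamMin_le R (Nat.succ_le_succ (Nat.zero_le _)) hmem
      have hMle : lamMin R (k + 1) ≤ M := by
        rcases max_cases M (euclNorm (latVec R w)) with ⟨h1, _⟩ | ⟨h1, _⟩
        · rwa [h1] at hle
        · rw [h1] at hle; linarith
      obtain ⟨j₀, _, hj₀⟩ := Finset.exists_mem_eq_sup' Finset.univ_nonempty
        (fun j : Fin k => euclNorm (latVec R (u j)))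
      have hMval : M = lamMin R ((j₀ : ℕ) + 1) := by rw [hM, hj₀, hnorm j₀]
      -- apply strong induction at j₀ < k with the first j₀ vectors
      have hj₀k : (j₀ : ℕ) < k := j₀.2
      have hcast : ((j₀ : ℕ) : ℕ) ≤ k := le_of_lt hj₀k
      have hind'' : LinearIndependent ℝ
          (fun j : Fin (j₀ : ℕ) => latVec R (u (Fin.castLE hcast j))) :=
        hind.comp (Fin.castLE hcast) (Fin.castLE_injective hcast)
      have hnorm'' : ∀ j : Fin (j₀ : ℕ),
          euclNorm (latVec R (u (Fin.castLE hcast j))) = lamMin R ((j : ℕ) + 1) := by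
        intro j
        exact hnorm (Fin.castLE hcast j)
      have hw'' : latVec R w ∉ Submodule.span ℝ
          (Set.range fun j : Fin (j₀ : ℕ) => latVec R (u (Fin.castLE hcast j))) := by
        intro hmem'
        refine hw (Submodule.span_mono ?_ hmem')
        rintro x ⟨j, rfl⟩
        exact ⟨Fin.castLE hcast j, rfl⟩
      have := ih (j₀ : ℕ) hj₀k _ hind'' hnorm'' w hw''
      -- ‖w‖ < λ(k+1) ≤ M = λ(j₀+1) ≤ ‖w‖, contradiction
      rw [← hMval] at this
      have : lamMin R (k+1) ≤ euclNorm (latVec R w) := le_trans hMle this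
      linarith

/-- Greedy step: extend a partial attaining family by one vector. -/
lemma step (R : Matrix (Fin n) (Fin n) ℝ) (hR : R.det ≠ 0) {k : ℕ} (hk : k < n)
    (u : Fin k → Fin n → ℤ)
    (hind : LinearIndependent ℝ (fun j => latVec R (u j)))
    (hnorm : ∀ j : Fin k, euclNorm (latVec R (u j)) = lamMin R ((j : ℕ) + 1)) :
    ∃ w : Fin n → ℤ, euclNorm (latVec R w) = lamMin R (k + 1) ∧
      latVec R w ∉ Submodule.span ℝ (Set.range fun j => latVec R (u j)) := by
  obtain ⟨v, hvind, hvle⟩ := exists_attain R hR (Nat.succ_le_succ (Nat.zero_le k)) hk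
  set p : Submodule ℝ (Fin n → ℝ) := Submodule.span ℝ (Set.range fun j => latVec R (u j)) with hp
  have hex : ∃ m : Fin (k+1), latVec R (v m) ∉ p := by
    by_contra hall
    push_neg at hall
    have hindp : LinearIndependent ℝ (fun m : Fin (k+1) => (⟨latVec R (v m), hall m⟩ : p)) := by
      apply LinearIndependent.of_comp p.subtype
      exact hvind
    have hcard : Fintype.card (Fin (k+1)) ≤ Module.finrank ℝ p :=
      hindp.fintype_card_le_finrank
    have hrank : Module.finrank ℝ p ≤ k := by
      have := finrank_range_le_card (R := ℝ) (fun j : Fin k => latVec R (u j))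
      simpa [Set.finrank, Fintype.card_fin] using this
    simp only [Fintype.card_fin] at hcard
    omega
  obtain ⟨m, hm⟩ := hex
  refine ⟨v m, le_antisymm (hvle m) ?_, hm⟩
  exact lam_le_of_notMem R k u hind hnorm (v m) hm

/-- Extension of a partial attaining family to a full one. -/
lemma extend (R : Matrix (Fin n) (Fin n) ℝ) (hR : R.det ≠ 0) :
    ∀ (d k : ℕ) (hk : k + d = n) (u : Fin k → Fin n → ℤ),
      LinearIndependent ℝ (fun j => latVec R (u j)) →
      (∀ j : Fin k, euclNorm (latVec R (u j)) = lamMin R ((j : ℕ) + 1)) →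
      ∃ U : Fin n → Fin n → ℤ,
        LinearIndependent ℝ (fun j => latVec R (U j)) ∧
        (∀ j : Fin n, euclNorm (latVec R (U j)) = lamMin R ((j : ℕ) + 1)) ∧
        ∀ j : Fin k, U (Fin.castLE (by omega) j) = u j := by
  intro d
  induction d with
  | zero =>
    intro k hk u hind hnorm
    refine ⟨fun j => u (Fin.cast (by omega) j), ?_, ?_, ?_⟩
    · exact hind.comp (Fin.cast (by omega : n = k))
        (fun a b hab => by simpa [Fin.ext_iff] using hab)
    · intro j
      have := hnorm (Fin.cast (by omega) j)
      simpa using this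
    · intro j
      have hj : Fin.cast (by omega : n = k) (Fin.castLE (by omega : k ≤ n) j) = j := by
        ext; simp
      show u (Fin.cast (by omega : n = k) (Fin.castLE (by omega : k ≤ n) j)) = u j
      rw [hj]
  | succ d ihd =>
    intro k hk u hind hnorm
    have hkn : k < n := by omega
    obtain ⟨w, hwnorm, hwspan⟩ := step R hR hkn u hind hnorm
    set u' : Fin (k+1) → Fin n → ℤ := Fin.snoc u w with hu'
    have hsnoc : (fun j : Fin (k+1) => latVec R (u' j))
        = Fin.snoc (fun j => latVec R (u j)) (latVec R w) := by
      funext j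
      refine Fin.lastCases ?_ ?_ j
      · simp [hu']
      · intro j; simp [hu']
    have hind' : LinearIndependent ℝ (fun j : Fin (k+1) => latVec R (u' j)) := by
      rw [hsnoc]
      exact linearIndependent_fin_snoc.2 ⟨hind, hwspan⟩
    have hnorm' : ∀ j : Fin (k+1),
        euclNorm (latVec R (u' j)) = lamMin R ((j : ℕ) + 1) := by
      intro j
      refine Fin.lastCases ?_ ?_ j
      · simpa [hu'] using hwnorm
      · intro j
        simpa [hu'] using hnorm j
    obtain ⟨U, h1, h2, h3⟩ := ihd (k+1) (by omega) u' hind' hnorm'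
    refine ⟨U, h1, h2, fun j => ?_⟩
    have := h3 (Fin.castSucc j)
    have hcasteq : (Fin.castLE (by omega : k + 1 ≤ n) (Fin.castSucc j))
        = Fin.castLE (by omega : k ≤ n) j := by
      ext; simp
    rw [hcasteq] at this
    simpa [hu'] using this

end Stmt19Aux

/-- Let `R̄` be nonsingular with successive minima `λ_1 ≤ … ≤ λ_n` and
`1 ≤ i ≤ n`.  Suppose `c_1, …, c_{i-1} ∈ ℤ^n` are such that `R̄c_1, …, R̄c_{i-1}` are
linearly independent with `‖R̄c_j‖₂ = λ_j` for `1 ≤ j ≤ i-1`, and let `c̄ ∈ ℤ^n` satisfy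
`‖R̄c̄‖₂ = λ_i`.  If `c̄` is not the `i`-th column of any solution of the SMP for `R̄`,
then `R̄c̄ ∈ span{R̄c_1, …, R̄c_{i-1}}`. -/
theorem stmt19 {n : ℕ} (R : Matrix (Fin n) (Fin n) ℝ) (hR : R.det ≠ 0)
    (i : ℕ) (h1 : 1 ≤ i) (hin : i ≤ n)
    (c : Fin (i - 1) → Fin n → ℤ)
    (hindep : LinearIndependent ℝ fun j => latVec R (c j))
    (hnorm : ∀ j : Fin (i - 1), euclNorm (latVec R (c j)) = lamMin R ((j : ℕ) + 1))
    (cb : Fin n → ℤ) (hcb : euclNorm (latVec R cb) = lamMin R i)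
    (hnot : ¬ ∃ M : Matrix (Fin n) (Fin n) ℤ, IsSMPSolution R M ∧
      (fun t => M t ⟨i - 1, by omega⟩) = cb) :
    latVec R cb ∈ Submodule.span ℝ (Set.range fun j => latVec R (c j)) := by
  classical
  by_contra hsp
  have hi : (i - 1) + 1 = i := by omega
  set u0 : Fin ((i-1)+1) → Fin n → ℤ := Fin.snoc c cb with hu0
  have hsnoc : (fun j : Fin ((i-1)+1) => latVec R (u0 j))
      = Fin.snoc (fun j => latVec R (c j)) (latVec R cb) := by
    funext j
    refine Fin.lastCases ?_ ?_ j
    · simp [hu0]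
    · intro j; simp [hu0]
  have hind0 : LinearIndependent ℝ (fun j : Fin ((i-1)+1) => latVec R (u0 j)) := by
    rw [hsnoc]
    exact linearIndependent_fin_snoc.2 ⟨hindep, hsp⟩
  have hnorm0 : ∀ j : Fin ((i-1)+1),
      euclNorm (latVec R (u0 j)) = lamMin R ((j : ℕ) + 1) := by
    intro j
    refine Fin.lastCases ?_ ?_ j
    · have heq : ((Fin.last (i-1) : Fin ((i-1)+1)) : ℕ) + 1 = i := by simp [hi]
      rw [heq]
      have : u0 (Fin.last (i-1)) = cb := by rw [hu0, Fin.snoc_last]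
      rw [this, hcb]
    · intro j
      have : u0 (Fin.castSucc j) = c j := by rw [hu0, Fin.snoc_castSucc]
      rw [this]
      simpa using hnorm j
  obtain ⟨U, hU1, hU2, hU3⟩ := Stmt19Aux.extend R hR (n - ((i-1)+1)) ((i-1)+1) (by omega)
    u0 hind0 hnorm0
  set M : Matrix (Fin n) (Fin n) ℤ := Matrix.of fun t j => U j t with hM
  apply hnot
  refine ⟨M, ⟨?_, ?_⟩, ?_⟩
  · -- determinant nonzero
    have hL : (fun j : Fin n => latVec R (U j))
        = (fun x => R.mulVecLin x) ∘ (fun j => fun t => ((U j t : ℝ))) := by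
      funext j
      rfl
    have hUind : LinearIndependent ℝ (fun j => fun t => ((U j t : ℝ))) := by
      apply LinearIndependent.of_comp R.mulVecLin
      rw [← hL]
      exact hU1
    have hcols : LinearIndependent ℝ (fun j => (M.map (Int.cast : ℤ → ℝ)).transpose j) := hUind
    have hUnit : IsUnit (M.map (Int.cast : ℤ → ℝ)) :=
      Matrix.linearIndependent_cols_iff_isUnit.1 hcols
    have hdet : ((M.det : ℤ) : ℝ) ≠ 0 := by
      have h := (Matrix.isUnit_iff_isUnit_det _).1 hUnit
      have h2 : (M.map (Int.cast : ℤ → ℝ)).det ≠ 0 := h.ne_zero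
      have h3 : M.map (Int.cast : ℤ → ℝ) = (Int.castRingHom ℝ).mapMatrix M := rfl
      rw [h3, ← RingHom.map_det] at h2
      exact h2
    exact_mod_cast hdet
  · intro j
    have : (fun t => M t j) = U j := rfl
    rw [this]
    exact hU2 j
  · have hlast := hU3 (Fin.last (i-1))
    have hcasteq : (Fin.castLE (by omega : (i-1) + 1 ≤ n) (Fin.last (i-1)))
        = (⟨i - 1, by omega⟩ : Fin n) := by
      ext; simp
    rw [hcasteq] at hlast
    have hlast2 : u0 (Fin.last (i-1)) = cb := by rw [hu0, Fin.snoc_last]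
    rw [hlast2] at hlast
    funext t
    show U (⟨i - 1, by omega⟩ : Fin n) t = cb t
    rw [hlast]
end
end
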